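/- In oriented Bernoulli percolation on L at parameter p, for all integers k, s, n ≥ 1, P_p(R_n ≤ −k·s) ≤ (1 − V_p(s,n))^k, where R_n is the right-most point at height n connected from the nonpositive part of level 0 and V_p(s,n) is the probability of a vertical crossing of [0,s]×[0,n]. -/

import Mathlib

open MeasureTheory

namespace OrientedPerc

/-- Vertices of the plane; the lattice `L` consists of those with even coordinate sum. -/
abbrev Vtx := ℤ × ℤ

/-- An oriented edge is given by its base vertex and a direction:
`true` for the edge to `x + (1,1)`, `false` for the edge to `x + (-1,1)`. -/
abbrev Edge := Vtx × Bool

/-- A percolation configuration: each oriented edge is open (`true`) or closed. -/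
abbrev Config := Edge → Bool

/-- The endpoint of an oriented edge. -/
def tip (e : Edge) : Vtx := e.1 + (if e.2 then (1, 1) else (-1, 1))

/-- One open oriented step from `x` to `y`. -/
def Step (ω : Config) (x y : Vtx) : Prop :=
  ∃ b : Bool, ω (x, b) = true ∧ y = tip (x, b)

/-- `x → y`: there is an open oriented path from `x` to `y`. -/
def Conn (ω : Config) (x y : Vtx) : Prop := Relation.ReflTransGen (Step ω) x y

/-- `x → y` using only vertices in the set `S`. -/
def ConnIn (S : Set Vtx) (ω : Config) (x y : Vtx) : Prop :=
  x ∈ S ∧ Relation.ReflTransGen (fun a b => Step ω a b ∧ b ∈ S) x y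

/-- The box `[a,b] × [c,d]` intersected with the lattice `L`. -/
def box (a b c d : ℤ) : Set Vtx :=
  {v | a ≤ v.1 ∧ v.1 ≤ b ∧ c ≤ v.2 ∧ v.2 ≤ d ∧ Even (v.1 + v.2)}

/-- The box `[a,b] × [c,d]` is crossed vertically (bottom to top). -/
def CrossedVert (ω : Config) (a b c d : ℤ) : Prop :=
  ∃ x y : Vtx, x.2 = c ∧ y.2 = d ∧ ConnIn (box a b c d) ω x y

/-- The box `[a,b] × [c,d]` is crossed from left to right. -/
def CrossedLR (ω : Config) (a b c d : ℤ) : Prop :=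
  ∃ x y : Vtx, x.1 = a ∧ y.1 = b ∧ ConnIn (box a b c d) ω x y

/-- `μ` is Bernoulli oriented bond percolation with parameter `p`:
the states of edges are i.i.d., each open with probability `p`. -/
def IsBernoulli (μ : Measure Config) (p : ℝ) : Prop :=
  IsProbabilityMeasure μ ∧ p ∈ Set.Icc (0 : ℝ) 1 ∧
    ∀ (s : Finset Edge) (f : Edge → Bool),
      (μ {ω | ∀ e ∈ s, ω e = f e}).toReal = ∏ e ∈ s, (if f e then p else 1 - p)

/-- Probability of a vertical crossing of `[0,m] × [0,n]`. -/
noncomputable def V (μ : Measure Config) (m n : ℕ) : ℝ :=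
  (μ {ω | CrossedVert ω 0 (m : ℤ) 0 (n : ℤ)}).toReal

/-- Probability of a left-right crossing of `[0,m] × [0,n]`. -/
noncomputable def H (μ : Measure Config) (m n : ℕ) : ℝ :=
  (μ {ω | CrossedLR ω 0 (m : ℤ) 0 (n : ℤ)}).toReal

/-- The event `R_n ≥ t`: some `(y,0)` with `y ≤ 0` even is connected to some
`(x,n)` with `x ≥ t`. -/
def Rge (ω : Config) (n t : ℤ) : Prop :=
  ∃ x y : ℤ, Even y ∧ y ≤ 0 ∧ t ≤ x ∧ Conn ω (y, 0) (x, n)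

/-- The event `0 → ℓ_n`. -/
def ConnToLine (ω : Config) (n : ℤ) : Prop := ∃ x : ℤ, Conn ω (0, 0) (x, n)


section Machinery
attribute [local instance 10] Classical.propDecidable

variable {μ : Measure Config} {p : ℝ}

/-- Cylinder set: configurations agreeing with `S` on `E`. -/
def cylS (E S : Finset Edge) : Set Config := {ω | ∀ e ∈ E, ω e = decide (e ∈ S)}

/-- `A` depends only on the edges in `E`. -/
def DepOn (A : Set Config) (E : Finset Edge) : Prop :=
  ∀ ⦃ω ω' : Config⦄, (∀ e ∈ E, ω e = ω' e) → ω ∈ A → ω' ∈ A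

/-- `A` is an increasing event. -/
def Incr (A : Set Config) : Prop :=
  ∀ ⦃ω ω' : Config⦄, (∀ e, ω e = true → ω' e = true) → ω ∈ A → ω' ∈ A

lemma DepOn.compl {A : Set Config} {E : Finset Edge} (h : DepOn A E) : DepOn Aᶜ E := by
  intro ω ω' hag hω hmem
  exact hω (h (fun e he => (hag e he).symm) hmem)

lemma DepOn.inter {A B : Set Config} {E F : Finset Edge} (hA : DepOn A E) (hB : DepOn B F) :
    DepOn (A ∩ B) (E ∪ F) := by
  intro ω ω' hag hω
  exact ⟨hA (fun e he => hag e (Finset.mem_union_left _ he)) hω.1,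
    hB (fun e he => hag e (Finset.mem_union_right _ he)) hω.2⟩

lemma DepOn.mono {A : Set Config} {E F : Finset Edge} (h : DepOn A E) (hEF : E ⊆ F) :
    DepOn A F := fun _ _ hag => h (fun e he => hag e (hEF he))

lemma measurableSet_cylS (E S : Finset Edge) : MeasurableSet (cylS E S) := by
  have : cylS E S = ⋂ e ∈ (E : Set Edge), {ω : Config | ω e = decide (e ∈ S)} := by
    ext ω; simp [cylS]
  rw [this]
  exact MeasurableSet.biInter E.countable_toSet
    (fun e _ => measurable_pi_apply e (measurableSet_singleton _))

lemma cylS_self {E : Finset Edge} (ω : Config) : ω ∈ cylS E (E.filter (fun e => ω e = true)) := by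
  intro e he
  by_cases h : ω e = true <;> simp [h, he]

lemma cylS_subset {A : Set Config} {E : Finset Edge} (hA : DepOn A E) {ω : Config}
    (hω : ω ∈ A) : cylS E (E.filter (fun e => ω e = true)) ⊆ A := by
  intro σ hσ
  refine hA (fun e he => ?_) hω
  have h1 := cylS_self (E := E) ω e he
  have h2 := hσ e he
  rw [h1, h2]

/-- Master decomposition: the probability of a local event is a sum of cylinder weights. -/
lemma measure_depOn_eq_sum (hB : IsBernoulli μ p) {A : Set Config} {E : Finset Edge}
    (hA : DepOn A E) :
    (μ A).toReal
      = ∑ S ∈ E.powerset, if cylS E S ⊆ A then (∏ e ∈ E, if e ∈ S then p else 1 - p) else 0 := by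
  haveI := hB.1
  have hpart : A = ⋃ S ∈ (E.powerset.filter (fun S => cylS E S ⊆ A)), cylS E S := by
    apply Set.Subset.antisymm
    · intro ω hω
      refine Set.mem_biUnion (Finset.mem_coe.mpr (Finset.mem_filter.mpr
        ⟨Finset.mem_powerset.mpr (Finset.filter_subset _ _), cylS_subset hA hω⟩))
        (cylS_self (E := E) ω)
    · intro ω hω
      obtain ⟨S, hS, hω⟩ := Set.mem_iUnion₂.mp hω
      exact (Finset.mem_filter.mp hS).2 hω
  have hdisj : Set.PairwiseDisjoint
      ↑(E.powerset.filter (fun S => cylS E S ⊆ A)) (fun S => cylS E S) := by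
    intro S hS T hT hne
    simp only [Finset.coe_filter, Set.mem_setOf_eq, Finset.mem_powerset] at hS hT
    refine Set.disjoint_left.mpr (fun ω hωS hωT => hne ?_)
    ext e
    by_cases he : e ∈ E
    · have := (hωS e he).symm.trans (hωT e he)
      simpa using this
    · constructor
      · intro h; exact absurd (hS.1 h) he
      · intro h; exact absurd (hT.1 h) he
  have hmeas : ∀ S ∈ (E.powerset.filter (fun S => cylS E S ⊆ A)), MeasurableSet (cylS E S) :=
    fun S _ => measurableSet_cylS E S
  have h1 : μ A = ∑ S ∈ (E.powerset.filter (fun S => cylS E S ⊆ A)), μ (cylS E S) :=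
    (congrArg μ hpart).trans (measure_biUnion_finset hdisj hmeas)
  rw [h1, ENNReal.toReal_sum (fun S _ => measure_ne_top μ _), Finset.sum_filter]
  refine Finset.sum_congr rfl (fun S hS => ?_)
  by_cases h : cylS E S ⊆ A
  · rw [if_pos h, if_pos h]
    have hf := hB.2.2 E (fun e => decide (e ∈ S))
    have hset : {ω : Config | ∀ e ∈ E, ω e = decide (e ∈ S)} = cylS E S := rfl
    rw [hset] at hf
    rw [hf]
    refine Finset.prod_congr rfl (fun e _ => ?_)
    by_cases h : e ∈ S <;> simp [h]
  · rw [if_neg h, if_neg h]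

lemma DepOn.measurableSet {A : Set Config} {E : Finset Edge} (hA : DepOn A E) :
    MeasurableSet A := by
  have hpart : A = ⋃ S ∈ (E.powerset.filter (fun S => cylS E S ⊆ A)), cylS E S := by
    apply Set.Subset.antisymm
    · intro ω hω
      refine Set.mem_biUnion (Finset.mem_coe.mpr (Finset.mem_filter.mpr
        ⟨Finset.mem_powerset.mpr (Finset.filter_subset _ _), cylS_subset hA hω⟩))
        (cylS_self (E := E) ω)
    · intro ω hω
      obtain ⟨S, hS, hω⟩ := Set.mem_iUnion₂.mp hω
      exact (Finset.mem_filter.mp hS).2 hω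
  rw [hpart]
  exact (E.powerset.filter _).measurableSet_biUnion (fun S _ => measurableSet_cylS E S)

lemma prob_toReal_nonneg (A : Set Config) : 0 ≤ (μ A).toReal := ENNReal.toReal_nonneg

lemma prob_toReal_le_one (hB : IsBernoulli μ p) (A : Set Config) : (μ A).toReal ≤ 1 := by
  haveI := hB.1
  have := measure_mono (μ := μ) (Set.subset_univ A)
  have h2 : (μ Set.univ) = 1 := measure_univ
  calc (μ A).toReal ≤ (μ (Set.univ : Set Config)).toReal :=
        ENNReal.toReal_mono (by simp [h2]) this
    _ = 1 := by simp [h2]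

lemma prob_compl (hB : IsBernoulli μ p) {A : Set Config} {E : Finset Edge} (hA : DepOn A E) :
    (μ Aᶜ).toReal = 1 - (μ A).toReal := by
  haveI := hB.1
  have h := measure_add_measure_compl hA.measurableSet (μ := μ)
  have h2 : (μ A).toReal + (μ Aᶜ).toReal = 1 := by
    rw [← ENNReal.toReal_add (measure_ne_top μ _) (measure_ne_top μ _), h]
    simp
  linarith

end Machinery
section Machinery2
attribute [local instance 10] Classical.propDecidable

variable {μ : Measure Config} {p : ℝ}

lemma mem_image_inj {ρ : Edge → Edge} (hρ : Function.Injective ρ) {S : Finset Edge} {e : Edge} :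
    ρ e ∈ S.image ρ ↔ e ∈ S := by
  constructor
  · intro h
    obtain ⟨x, hx, hxe⟩ := Finset.mem_image.mp h
    rwa [← hρ hxe]
  · exact Finset.mem_image_of_mem ρ

/-- Invariance: relabeling the edges by an injection preserves probabilities of local events. -/
lemma measure_comp_eq (hB : IsBernoulli μ p) {A : Set Config} {E : Finset Edge}
    (hA : DepOn A E) (ρ : Edge → Edge) (hρ : Function.Injective ρ) :
    (μ {ω | (fun e => ω (ρ e)) ∈ A}).toReal = (μ A).toReal := by
  have hA' : DepOn {ω : Config | (fun e => ω (ρ e)) ∈ A} (E.image ρ) := by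
    intro ω ω' hag hω
    exact hA (fun e he => hag (ρ e) (Finset.mem_image_of_mem ρ he)) hω
  rw [measure_depOn_eq_sum hB hA', measure_depOn_eq_sum hB hA]
  refine Finset.sum_nbij' (fun S => E.filter (fun e => ρ e ∈ S)) (fun S => S.image ρ)
    (fun S _ => Finset.mem_powerset.mpr (Finset.filter_subset _ _))
    (fun S hS => Finset.mem_powerset.mpr
      (Finset.image_subset_image (Finset.mem_powerset.mp hS)))
    ?_ ?_ ?_
  · -- left_inv : (E.filter (ρ · ∈ S)).image ρ = S for S ⊆ E.image ρ
    intro S hS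
    have hSE := Finset.mem_powerset.mp hS
    ext e'
    constructor
    · intro h
      obtain ⟨x, hx, hxe⟩ := Finset.mem_image.mp h
      exact hxe ▸ (Finset.mem_filter.mp hx).2
    · intro h
      obtain ⟨x, hx, hxe⟩ := Finset.mem_image.mp (hSE h)
      subst hxe
      show ρ x ∈ (E.filter (fun e => ρ e ∈ S)).image ρ
      exact Finset.mem_image_of_mem ρ (Finset.mem_filter.mpr ⟨hx, h⟩)
  · -- right_inv : E.filter (ρ · ∈ S.image ρ) = S for S ⊆ E
    intro S hS
    have hSE := Finset.mem_powerset.mp hS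
    ext e
    rw [Finset.mem_filter, mem_image_inj hρ]
    exact ⟨fun h => h.2, fun h => ⟨hSE h, h⟩⟩
  · -- values agree
    intro S hS
    have hSE := Finset.mem_powerset.mp hS
    have hcond : (cylS (E.image ρ) S ⊆ {ω : Config | (fun e => ω (ρ e)) ∈ A})
        ↔ cylS E (E.filter (fun e => ρ e ∈ S)) ⊆ A := by
      constructor
      · intro h ω hω
        have hϖ : (fun e' => decide (e' ∈ S) : Config) ∈ cylS (E.image ρ) S :=
          fun e' _ => rfl
        have h2 := h hϖ
        refine hA (fun e he => ?_) h2
        show decide (ρ e ∈ S) = ω e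
        rw [hω e he]
        exact decide_eq_decide.mpr (by simp [Finset.mem_filter, he])
      · intro h ω hω
        refine h (fun e he => ?_)
        rw [hω (ρ e) (Finset.mem_image_of_mem ρ he)]
        exact decide_eq_decide.mpr (by simp [Finset.mem_filter, he])
    have hprod : (∏ e ∈ E.image ρ, if e ∈ S then p else 1 - p)
        = ∏ e ∈ E, if e ∈ E.filter (fun e => ρ e ∈ S) then p else 1 - p := by
      rw [Finset.prod_image (fun x _ y _ h => hρ h)]
      refine Finset.prod_congr rfl (fun e he => ?_)
      congr 1
      simp [Finset.mem_filter, he]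
    rw [← hcond] at *
    by_cases h : cylS (E.image ρ) S ⊆ {ω : Config | (fun e => ω (ρ e)) ∈ A}
    · rw [if_pos h, if_pos (hcond.mp h), hprod]
    · rw [if_neg h, if_neg (fun hc => h (hcond.mpr hc))]

/-- Independence: events depending on disjoint edge sets have multiplicative probabilities. -/
lemma measure_inter_eq_mul (hB : IsBernoulli μ p) {A B : Set Config} {E F : Finset Edge}
    (hA : DepOn A E) (hBd : DepOn B F) (hEF : Disjoint E F) :
    (μ (A ∩ B)).toReal = (μ A).toReal * (μ B).toReal := by
  rw [measure_depOn_eq_sum hB (hA.inter hBd), measure_depOn_eq_sum hB hA,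
    measure_depOn_eq_sum hB hBd, Finset.sum_mul_sum, ← Finset.sum_product']
  refine Finset.sum_nbij' (fun U => (U ∩ E, U ∩ F)) (fun ST => ST.1 ∪ ST.2) ?_ ?_ ?_ ?_ ?_
  · intro U hU
    simp only [Finset.mem_product, Finset.mem_powerset]
    exact ⟨Finset.inter_subset_right, Finset.inter_subset_right⟩
  · intro ST hST
    simp only [Finset.mem_product, Finset.mem_powerset] at hST
    exact Finset.mem_powerset.mpr (Finset.union_subset
      (hST.1.trans Finset.subset_union_left) (hST.2.trans Finset.subset_union_right))
  · intro U hU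
    have hUE := Finset.mem_powerset.mp hU
    ext e
    simp only [Finset.mem_union, Finset.mem_inter]
    constructor
    · rintro (⟨h, _⟩ | ⟨h, _⟩) <;> exact h
    · intro h
      rcases Finset.mem_union.mp (hUE h) with h' | h'
      · exact Or.inl ⟨h, h'⟩
      · exact Or.inr ⟨h, h'⟩
  · intro ST hST
    simp only [Finset.mem_product, Finset.mem_powerset] at hST
    obtain ⟨h1, h2⟩ := hST
    have d1 : ST.2 ∩ E = ∅ := by
      rw [Finset.eq_empty_iff_forall_notMem]
      intro e he
      have := Finset.mem_inter.mp he
      exact (Finset.disjoint_right.mp hEF (h2 this.1)) this.2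
    have d2 : ST.1 ∩ F = ∅ := by
      rw [Finset.eq_empty_iff_forall_notMem]
      intro e he
      have := Finset.mem_inter.mp he
      exact (Finset.disjoint_left.mp hEF (h1 this.1)) this.2
    have e1 : (ST.1 ∪ ST.2) ∩ E = ST.1 := by
      rw [Finset.union_inter_distrib_right, d1, Finset.union_empty,
        Finset.inter_eq_left.mpr h1]
    have e2 : (ST.1 ∪ ST.2) ∩ F = ST.2 := by
      rw [Finset.union_inter_distrib_right, d2, Finset.empty_union,
        Finset.inter_eq_left.mpr h2]
    show ((ST.1 ∪ ST.2) ∩ E, (ST.1 ∪ ST.2) ∩ F) = ST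
    rw [Prod.ext_iff]
    exact ⟨e1, e2⟩
  · intro U hU
    have hUE := Finset.mem_powerset.mp hU
    have hcylE : ∀ ω : Config, ω ∈ cylS (E ∪ F) U → ω ∈ cylS E (U ∩ E) := by
      intro ω hω e he
      rw [hω e (Finset.mem_union_left _ he)]
      exact decide_eq_decide.mpr (by simp [he])
    have hcylF : ∀ ω : Config, ω ∈ cylS (E ∪ F) U → ω ∈ cylS F (U ∩ F) := by
      intro ω hω e he
      rw [hω e (Finset.mem_union_right _ he)]
      exact decide_eq_decide.mpr (by simp [he])
    have hcond : (cylS (E ∪ F) U ⊆ A ∩ B)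
        ↔ (cylS E (U ∩ E) ⊆ A ∧ cylS F (U ∩ F) ⊆ B) := by
      constructor
      · intro h
        have hϖmem : (fun e => decide (e ∈ U) : Config) ∈ cylS (E ∪ F) U := fun e _ => rfl
        have hϖ := h hϖmem
        constructor
        · intro ω hω
          refine hA (fun e he => ?_) hϖ.1
          show decide (e ∈ U) = ω e
          rw [hω e he]
          exact decide_eq_decide.mpr (by simp [he])
        · intro ω hω
          refine hBd (fun e he => ?_) hϖ.2
          show decide (e ∈ U) = ω e
          rw [hω e he]
          exact decide_eq_decide.mpr (by simp [he])
      · intro h ω hω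
        exact ⟨h.1 (hcylE ω hω), h.2 (hcylF ω hω)⟩
    have hprod : (∏ e ∈ E ∪ F, if e ∈ U then p else 1 - p)
        = (∏ e ∈ E, if e ∈ U ∩ E then p else 1 - p)
          * (∏ e ∈ F, if e ∈ U ∩ F then p else 1 - p) := by
      rw [Finset.prod_union hEF]
      congr 1
      · exact Finset.prod_congr rfl (fun e he => by congr 1; simp [he])
      · exact Finset.prod_congr rfl (fun e he => by congr 1; simp [he])
    by_cases h : cylS (E ∪ F) U ⊆ A ∩ B
    · rw [if_pos h, if_pos (hcond.mp h).1, if_pos (hcond.mp h).2, hprod]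
    · rw [if_neg h]
      rcases not_and_or.mp (fun hc => h (hcond.mpr hc)) with h' | h'
      · rw [if_neg h', zero_mul]
      · rw [if_neg h', mul_zero]

lemma prob_edge (hB : IsBernoulli μ p) (e : Edge) (b : Bool) :
    (μ {ω : Config | ω e = b}).toReal = if b then p else 1 - p := by
  have hf := hB.2.2 {e} (fun _ => b)
  have hset : {ω : Config | ∀ e' ∈ ({e} : Finset Edge), ω e' = b} = {ω : Config | ω e = b} := by
    ext ω; simp
  rw [hset] at hf
  rw [hf, Finset.prod_singleton]

end Machinery2
section Harris
attribute [local instance 10] Classical.propDecidable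

variable {μ : Measure Config} {p : ℝ}

lemma depOn_edge (e : Edge) (b : Bool) : DepOn {ω : Config | ω e = b} {e} := by
  intro ω ω' hag hω
  show ω' e = b
  rw [← hag e (Finset.mem_singleton_self e)]
  exact hω

lemma prob_mono (hB : IsBernoulli μ p) {A B : Set Config} (h : A ⊆ B) :
    (μ A).toReal ≤ (μ B).toReal := by
  haveI := hB.1
  exact ENNReal.toReal_mono (measure_ne_top μ _) (measure_mono h)

/-- Harris/FKG inequality for increasing local events. -/
lemma harris (hB : IsBernoulli μ p) :
    ∀ (E : Finset Edge) (A B : Set Config), DepOn A E → DepOn B E → Incr A → Incr B →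
    (μ A).toReal * (μ B).toReal ≤ (μ (A ∩ B)).toReal := by
  intro E
  induction E using Finset.induction_on with
  | empty =>
    intro A B hA hBd _ _
    haveI := hB.1
    rcases Set.eq_empty_or_nonempty A with h | ⟨ω₀, hω₀⟩
    · simp [h]
    · have hAu : A = Set.univ := Set.eq_univ_of_forall
        (fun ω => hA (fun e he => absurd he (Finset.notMem_empty e)) hω₀)
      rw [hAu, Set.univ_inter]
      simp
  | @insert e E hne ih =>
    intro A B hA hBd hIA hIB
    haveI := hB.1
    -- conditional slices
    have hdep : ∀ (C : Set Config), DepOn C (insert e E) → ∀ b,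
        DepOn {ω : Config | Function.update ω e b ∈ C} E := by
      intro C hC b ω ω' hag hω
      refine hC (fun e' he' => ?_) hω
      rcases Finset.mem_insert.mp he' with h | h
      · subst h; rw [Function.update_self, Function.update_self]
      · have hne' : e' ≠ e := fun hc => hne (hc ▸ h)
        rw [Function.update_of_ne hne', Function.update_of_ne hne']
        exact hag e' h
    have hkey : ∀ (C : Set Config) (b : Bool),
        C ∩ {ω : Config | ω e = b} = {ω : Config | Function.update ω e b ∈ C}
          ∩ {ω : Config | ω e = b} := by
      intro C b
      ext ω
      constructor
      · rintro ⟨h1, h2⟩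
        refine ⟨?_, h2⟩
        show Function.update ω e b ∈ C
        have : Function.update ω e b = ω := by
          rw [show b = ω e from h2.symm]; exact Function.update_eq_self e ω
        rwa [this]
      · rintro ⟨h1, h2⟩
        refine ⟨?_, h2⟩
        have : Function.update ω e b = ω := by
          rw [show b = ω e from h2.symm]; exact Function.update_eq_self e ω
        rwa [← this]
    have hdecomp : ∀ (C : Set Config), DepOn C (insert e E) →
        (μ C).toReal = p * (μ {ω : Config | Function.update ω e true ∈ C}).toReal
          + (1 - p) * (μ {ω : Config | Function.update ω e false ∈ C}).toReal := by
      intro C hC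
      have hsplit : C = (C ∩ {ω : Config | ω e = true}) ∪ (C ∩ {ω : Config | ω e = false}) := by
        ext ω
        rcases Bool.dichotomy (ω e) with h | h <;>
          simp [Set.mem_inter_iff, h, Set.mem_setOf_eq]
      have hmeas2 : MeasurableSet (C ∩ {ω : Config | ω e = false}) := by
        rw [hkey C false]
        exact (DepOn.inter (hdep C hC false) (depOn_edge e false)).measurableSet
      have hdisj : Disjoint (C ∩ {ω : Config | ω e = true}) (C ∩ {ω : Config | ω e = false}) := by
        refine Set.disjoint_left.mpr ?_
        rintro ω ⟨_, h1⟩ ⟨_, h2⟩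
        simp only [Set.mem_setOf_eq] at h1 h2
        rw [h1] at h2
        exact Bool.noConfusion h2
      have hEe : Disjoint E ({e} : Finset Edge) := by
        rw [Finset.disjoint_singleton_right]
        exact hne
      have hval : ∀ b : Bool, (μ (C ∩ {ω : Config | ω e = b})).toReal
          = (if b then p else 1 - p) * (μ {ω : Config | Function.update ω e b ∈ C}).toReal := by
        intro b
        rw [hkey C b, measure_inter_eq_mul hB (hdep C hC b) (depOn_edge e b) hEe,
          prob_edge hB e b, mul_comm]
      calc (μ C).toReal
          = (μ ((C ∩ {ω : Config | ω e = true}) ∪ (C ∩ {ω : Config | ω e = false}))).toReal := by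
            rw [← hsplit]
        _ = (μ (C ∩ {ω : Config | ω e = true})).toReal
            + (μ (C ∩ {ω : Config | ω e = false})).toReal := by
            rw [measure_union hdisj hmeas2,
              ENNReal.toReal_add (measure_ne_top μ _) (measure_ne_top μ _)]
        _ = p * (μ {ω : Config | Function.update ω e true ∈ C}).toReal
            + (1 - p) * (μ {ω : Config | Function.update ω e false ∈ C}).toReal := by
            rw [hval true, hval false]
            simp
    -- slices of A, B, and A ∩ B
    have hincr : ∀ (C : Set Config), Incr C → ∀ b,
        Incr {ω : Config | Function.update ω e b ∈ C} := by
      intro C hC b ω ω' hle hω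
      refine hC (fun e' h' => ?_) hω
      by_cases hee : e' = e
      · subst hee; rwa [Function.update_self] at h' ⊢
      · rw [Function.update_of_ne hee] at h' ⊢
        exact hle e' h'
    have hsub : ∀ (C : Set Config), Incr C →
        {ω : Config | Function.update ω e false ∈ C}
          ⊆ {ω : Config | Function.update ω e true ∈ C} := by
      intro C hC ω hω
      refine hC (fun e' h' => ?_) hω
      by_cases hee : e' = e
      · subst hee; rw [Function.update_self]
      · rwa [Function.update_of_ne hee] at h' ⊢
    have hABslice : ∀ b : Bool, {ω : Config | Function.update ω e b ∈ A ∩ B}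
        = {ω : Config | Function.update ω e b ∈ A} ∩ {ω : Config | Function.update ω e b ∈ B} :=
      fun b => rfl
    rw [hdecomp A hA, hdecomp B hBd, hdecomp (A ∩ B) (hA.inter hBd |>.mono (by simp))]
    set x1 := (μ {ω : Config | Function.update ω e true ∈ A}).toReal with hx1
    set x0 := (μ {ω : Config | Function.update ω e false ∈ A}).toReal with hx0
    set y1 := (μ {ω : Config | Function.update ω e true ∈ B}).toReal with hy1
    set y0 := (μ {ω : Config | Function.update ω e false ∈ B}).toReal with hy0
    have hIH1 : x1 * y1 ≤ (μ {ω : Config | Function.update ω e true ∈ A ∩ B}).toReal := by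
      rw [hABslice true]
      exact ih _ _ (hdep A hA true) (hdep B hBd true) (hincr A hIA true) (hincr B hIB true)
    have hIH0 : x0 * y0 ≤ (μ {ω : Config | Function.update ω e false ∈ A ∩ B}).toReal := by
      rw [hABslice false]
      exact ih _ _ (hdep A hA false) (hdep B hBd false) (hincr A hIA false) (hincr B hIB false)
    have hx01 : x0 ≤ x1 := prob_mono hB (hsub A hIA)
    have hy01 : y0 ≤ y1 := prob_mono hB (hsub B hIB)
    have hp0 : 0 ≤ p := hB.2.1.1
    have hp1 : p ≤ 1 := hB.2.1.2
    have hx0n : 0 ≤ x0 := ENNReal.toReal_nonneg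
    have hy0n : 0 ≤ y0 := ENNReal.toReal_nonneg
    nlinarith [mul_nonneg (mul_nonneg hp0 (by linarith : (0:ℝ) ≤ 1 - p))
      (mul_nonneg (by linarith : (0:ℝ) ≤ x1 - x0) (by linarith : (0:ℝ) ≤ y1 - y0)),
      mul_le_mul_of_nonneg_left hIH1 hp0,
      mul_le_mul_of_nonneg_left hIH0 (by linarith : (0:ℝ) ≤ 1 - p)]
end Harris
section Combinatorics

/-- Endpoint of a path inside `S` stays in `S`. -/
lemma connIn_last_mem {S : Set Vtx} {ω : Config} {x y : Vtx} (hx : x ∈ S)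
    (h : Relation.ReflTransGen (fun a b => Step ω a b ∧ b ∈ S) x y) : y ∈ S := by
  induction h with
  | refl => exact hx
  | tail _ hs _ => exact hs.2

lemma ConnIn.mem_last {S : Set Vtx} {ω : Config} {x y : Vtx} (h : ConnIn S ω x y) : y ∈ S :=
  connIn_last_mem h.1 h.2

lemma ConnIn.toConn {S : Set Vtx} {ω : Config} {x y : Vtx} (h : ConnIn S ω x y) :
    Conn ω x y := by
  obtain ⟨_, hp⟩ := h
  induction hp with
  | refl => exact Relation.ReflTransGen.refl
  | tail _ hs ih => exact Relation.ReflTransGen.tail ih hs.1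

/-- The edges with both endpoints in the box `[a,b] × [c,d]`. -/
noncomputable def eSup (a b c d : ℤ) : Finset Edge :=
  ((Finset.Icc a b ×ˢ Finset.Icc c d) ×ˢ (Finset.univ : Finset Bool)).filter
    (fun e => a ≤ (tip e).1 ∧ (tip e).1 ≤ b ∧ c ≤ (tip e).2 ∧ (tip e).2 ≤ d)

lemma mem_eSup {a b c d : ℤ} {e : Edge} :
    e ∈ eSup a b c d ↔ (a ≤ e.1.1 ∧ e.1.1 ≤ b ∧ c ≤ e.1.2 ∧ e.1.2 ≤ d
      ∧ a ≤ (tip e).1 ∧ (tip e).1 ≤ b ∧ c ≤ (tip e).2 ∧ (tip e).2 ≤ d) := by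
  unfold eSup
  rw [Finset.mem_filter]
  simp only [Finset.mem_product, Finset.mem_Icc, Finset.mem_univ, and_true]
  tauto

/-- A confined path only uses edges in the support of its box. -/
lemma connIn_congr {a b c d : ℤ} {ω ω' : Config}
    (h : ∀ e ∈ eSup a b c d, ω e = ω' e) {x y : Vtx}
    (hx : ConnIn (box a b c d) ω x y) : ConnIn (box a b c d) ω' x y := by
  obtain ⟨hxS, hp⟩ := hx
  refine ⟨hxS, ?_⟩
  induction hp with
  | refl => exact Relation.ReflTransGen.refl
  | @tail u v hp hs ih =>
    have huS : u ∈ box a b c d := connIn_last_mem hxS hp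
    obtain ⟨⟨dir, hopen, htip⟩, hvS⟩ := hs
    have hmem : ((u, dir) : Edge) ∈ eSup a b c d := by
      rw [mem_eSup]
      obtain ⟨h1, h2, h3, h4, _⟩ := huS
      have hv := hvS
      obtain ⟨h5, h6, h7, h8, _⟩ := hv
      rw [← htip] at *
      exact ⟨h1, h2, h3, h4, h5, h6, h7, h8⟩
    refine Relation.ReflTransGen.tail ih ⟨⟨dir, ?_, htip⟩, hvS⟩
    rw [← h _ hmem]
    exact hopen

lemma connIn_mono {S : Set Vtx} {ω ω' : Config}
    (h : ∀ e, ω e = true → ω' e = true) {x y : Vtx}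
    (hx : ConnIn S ω x y) : ConnIn S ω' x y := by
  obtain ⟨hxS, hp⟩ := hx
  refine ⟨hxS, ?_⟩
  induction hp with
  | refl => exact Relation.ReflTransGen.refl
  | @tail u v hp hs ih =>
    obtain ⟨⟨dir, hopen, htip⟩, hvS⟩ := hs
    exact Relation.ReflTransGen.tail ih ⟨⟨dir, h _ hopen, htip⟩, hvS⟩

/-- General crossing event with constrained endpoints. -/
def CrossE (a b c d : ℤ) (P Q : ℤ → Prop) : Set Config :=
  {ω | ∃ x y : Vtx, x.2 = c ∧ y.2 = d ∧ P x.1 ∧ Q y.1 ∧ ConnIn (box a b c d) ω x y}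

lemma depOn_crossE (a b c d : ℤ) (P Q : ℤ → Prop) :
    DepOn (CrossE a b c d P Q) (eSup a b c d) := by
  rintro ω ω' hag ⟨x, y, hx, hy, hP, hQ, hconn⟩
  exact ⟨x, y, hx, hy, hP, hQ, connIn_congr hag hconn⟩

lemma incr_crossE (a b c d : ℤ) (P Q : ℤ → Prop) : Incr (CrossE a b c d P Q) := by
  rintro ω ω' hle ⟨x, y, hx, hy, hP, hQ, hconn⟩
  exact ⟨x, y, hx, hy, hP, hQ, connIn_mono hle hconn⟩

lemma crossedVert_eq : ∀ a b c d : ℤ,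
    {ω : Config | CrossedVert ω a b c d}
      = CrossE a b c d (fun _ => True) (fun _ => True) := by
  intro a b c d
  ext ω
  constructor
  · rintro ⟨x, y, hx, hy, hconn⟩
    exact ⟨x, y, hx, hy, trivial, trivial, hconn⟩
  · rintro ⟨x, y, hx, hy, _, _, hconn⟩
    exact ⟨x, y, hx, hy, hconn⟩

/-- Generic forward path transport. -/
lemma connIn_map_fwd {ω' ω : Config} {S S' : Set Vtx} {σ : Vtx → Vtx}
    (hS : ∀ v ∈ S, σ v ∈ S') (hst : ∀ u v : Vtx, Step ω' u v → Step ω (σ u) (σ v))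
    {x y : Vtx} (h : ConnIn S ω' x y) : ConnIn S' ω (σ x) (σ y) := by
  obtain ⟨hxS, hp⟩ := h
  refine ⟨hS x hxS, ?_⟩
  induction hp with
  | refl => exact Relation.ReflTransGen.refl
  | @tail u v hp hs ih =>
    exact Relation.ReflTransGen.tail ih ⟨hst u v hs.1, hS v hs.2⟩

/-- Generic reversing path transport. -/
lemma connIn_map_rev {ω' ω : Config} {S S' : Set Vtx} {σ : Vtx → Vtx}
    (hS : ∀ v ∈ S, σ v ∈ S') (hst : ∀ u v : Vtx, Step ω' u v → Step ω (σ v) (σ u))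
    {x y : Vtx} (h : ConnIn S ω' x y) : ConnIn S' ω (σ y) (σ x) := by
  obtain ⟨hxS, hp⟩ := h
  refine ⟨hS y (connIn_last_mem hxS hp), ?_⟩
  induction hp with
  | refl => exact Relation.ReflTransGen.refl
  | @tail u v hp hs ih =>
    have huS : u ∈ S := connIn_last_mem hxS hp
    exact Relation.ReflTransGen.head ⟨hst u v hs.1, hS u huS⟩ ih

end Combinatorics
section Transport

/-- Horizontal translation of edges. -/
def ρT (u : ℤ) : Edge → Edge := fun e => ((e.1.1 + u, e.1.2), e.2)
/-- Vertical flip (about heights `[0,n]`) combined with horizontal translation. -/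
def ρF (m n : ℤ) : Edge → Edge :=
  fun e => ((e.1.1 + (if e.2 then 1 else -1) + m, n - e.1.2 - 1), !e.2)
/-- 180° rotation. -/
def ρR (m n : ℤ) : Edge → Edge :=
  fun e => ((m - e.1.1 - (if e.2 then 1 else -1), n - e.1.2 - 1), e.2)
/-- Horizontal reflection. -/
def ρX (m : ℤ) : Edge → Edge := fun e => ((m - e.1.1, e.1.2), !e.2)

lemma ρT_inj (u : ℤ) : Function.Injective (ρT u) := by
  rintro ⟨⟨a1, a2⟩, d⟩ ⟨⟨b1, b2⟩, d'⟩ h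
  simp only [ρT, Prod.ext_iff] at h ⊢
  exact ⟨⟨by omega, h.1.2⟩, h.2⟩

lemma ρF_inj (m n : ℤ) : Function.Injective (ρF m n) := by
  rintro ⟨⟨a1, a2⟩, d⟩ ⟨⟨b1, b2⟩, d'⟩ h
  simp only [ρF, Prod.ext_iff] at h ⊢
  cases d <;> cases d' <;> simp_all <;> omega

lemma ρR_inj (m n : ℤ) : Function.Injective (ρR m n) := by
  rintro ⟨⟨a1, a2⟩, d⟩ ⟨⟨b1, b2⟩, d'⟩ h
  simp only [ρR, Prod.ext_iff] at h ⊢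
  cases d <;> cases d' <;> simp_all <;> omega

lemma ρX_inj (m : ℤ) : Function.Injective (ρX m) := by
  rintro ⟨⟨a1, a2⟩, d⟩ ⟨⟨b1, b2⟩, d'⟩ h
  simp only [ρX, Prod.ext_iff] at h ⊢
  cases d <;> cases d' <;> simp_all <;> omega

lemma step_ρT_fwd (ω : Config) (u : ℤ) {x y : Vtx}
    (h : Step (fun e => ω (ρT u e)) x y) : Step ω (x.1 + u, x.2) (y.1 + u, y.2) := by
  obtain ⟨d, hopen, htip⟩ := h
  refine ⟨d, hopen, ?_⟩
  subst htip; cases d <;> simp [tip, ρT, Prod.ext_iff] <;> omega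

lemma step_ρT_rev (ω : Config) (u : ℤ) {x y : Vtx}
    (h : Step ω x y) : Step (fun e => ω (ρT u e)) (x.1 - u, x.2) (y.1 - u, y.2) := by
  obtain ⟨d, hopen, htip⟩ := h
  refine ⟨d, ?_, ?_⟩
  · show ω (ρT u ((x.1 - u, x.2), d)) = true
    have heq : ρT u ((x.1 - u, x.2), d) = (x, d) := by
      simp [ρT, Prod.ext_iff]
    rw [heq]; exact hopen
  · subst htip; cases d <;> simp [tip, ρT, Prod.ext_iff] <;> omega

lemma step_ρF_fwd (ω : Config) (m n : ℤ) {x y : Vtx}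
    (h : Step (fun e => ω (ρF m n e)) x y) :
    Step ω (y.1 + m, n - y.2) (x.1 + m, n - x.2) := by
  obtain ⟨d, hopen, htip⟩ := h
  refine ⟨!d, ?_, ?_⟩
  · have heq : (((y.1 + m, n - y.2), !d) : Edge) = ρF m n (x, d) := by
      subst htip; cases d <;> simp [ρF, tip, Prod.ext_iff] <;> omega
    rw [heq]; exact hopen
  · subst htip; cases d <;> simp [tip, ρF, Prod.ext_iff] <;> omega

lemma step_ρF_rev (ω : Config) (m n : ℤ) {x y : Vtx}
    (h : Step ω x y) :
    Step (fun e => ω (ρF m n e)) (y.1 - m, n - y.2) (x.1 - m, n - x.2) := by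
  obtain ⟨d, hopen, htip⟩ := h
  refine ⟨!d, ?_, ?_⟩
  · show ω (ρF m n ((y.1 - m, n - y.2), !d)) = true
    have heq : ρF m n ((y.1 - m, n - y.2), !d) = (x, d) := by
      subst htip; cases d <;> simp [ρF, tip, Prod.ext_iff] <;> omega
    rw [heq]; exact hopen
  · subst htip; cases d <;> simp [tip, ρF, Prod.ext_iff] <;> omega

lemma step_ρR_fwd (ω : Config) (m n : ℤ) {x y : Vtx}
    (h : Step (fun e => ω (ρR m n e)) x y) :
    Step ω (m - y.1, n - y.2) (m - x.1, n - x.2) := by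
  obtain ⟨d, hopen, htip⟩ := h
  refine ⟨d, ?_, ?_⟩
  · have heq : (((m - y.1, n - y.2), d) : Edge) = ρR m n (x, d) := by
      subst htip; cases d <;> simp [ρR, tip, Prod.ext_iff] <;> omega
    rw [heq]; exact hopen
  · subst htip; cases d <;> simp [tip, ρR, Prod.ext_iff] <;> omega

lemma step_ρR_rev (ω : Config) (m n : ℤ) {x y : Vtx}
    (h : Step ω x y) :
    Step (fun e => ω (ρR m n e)) (m - y.1, n - y.2) (m - x.1, n - x.2) := by
  obtain ⟨d, hopen, htip⟩ := h
  refine ⟨d, ?_, ?_⟩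
  · show ω (ρR m n ((m - y.1, n - y.2), d)) = true
    have heq : ρR m n ((m - y.1, n - y.2), d) = (x, d) := by
      subst htip; cases d <;> simp [ρR, tip, Prod.ext_iff] <;> omega
    rw [heq]; exact hopen
  · subst htip; cases d <;> simp [tip, ρR, Prod.ext_iff] <;> omega

lemma step_ρX_fwd (ω : Config) (m : ℤ) {x y : Vtx}
    (h : Step (fun e => ω (ρX m e)) x y) :
    Step ω (m - x.1, x.2) (m - y.1, y.2) := by
  obtain ⟨d, hopen, htip⟩ := h
  refine ⟨!d, ?_, ?_⟩
  · have heq : (((m - x.1, x.2), !d) : Edge) = ρX m (x, d) := by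
      simp [ρX]
    rw [heq]; exact hopen
  · subst htip; cases d <;> simp [tip, ρX, Prod.ext_iff] <;> omega

lemma step_ρX_rev (ω : Config) (m : ℤ) {x y : Vtx}
    (h : Step ω x y) :
    Step (fun e => ω (ρX m e)) (m - x.1, x.2) (m - y.1, y.2) := by
  obtain ⟨d, hopen, htip⟩ := h
  refine ⟨!d, ?_, ?_⟩
  · show ω (ρX m ((m - x.1, x.2), !d)) = true
    have heq : ρX m ((m - x.1, x.2), !d) = (x, d) := by
      cases d <;> simp [ρX, Prod.ext_iff] <;> omega
    rw [heq]; exact hopen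
  · subst htip; cases d <;> simp [tip, ρX, Prod.ext_iff] <;> omega

lemma crossE_ρT (u a b c d a' b' : ℤ) (hu : Even u) (ha : a' = a + u) (hb : b' = b + u)
    (P Q P' Q' : ℤ → Prop) (hP : ∀ t, P t ↔ P' (t + u)) (hQ : ∀ t, Q t ↔ Q' (t + u)) :
    {ω : Config | (fun e => ω (ρT u e)) ∈ CrossE a b c d P Q} = CrossE a' b' c d P' Q' := by
  have hu2 : u % 2 = 0 := Int.even_iff.mp hu
  ext ω
  constructor
  · rintro ⟨x, y, hx2, hy2, hPx, hQy, hconn⟩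
    refine ⟨(x.1 + u, x.2), (y.1 + u, y.2), by simpa using hx2, by simpa using hy2,
      (hP x.1).mp hPx, (hQ y.1).mp hQy, ?_⟩
    refine connIn_map_fwd (σ := fun v => (v.1 + u, v.2)) (fun v hv => ?_)
      (fun _ _ h => step_ρT_fwd ω u h) hconn
    simp only [box, Set.mem_setOf_eq, Int.even_iff] at hv ⊢
    omega
  · rintro ⟨x, y, hx2, hy2, hPx, hQy, hconn⟩
    refine ⟨(x.1 - u, x.2), (y.1 - u, y.2), by simpa using hx2, by simpa using hy2, ?_, ?_, ?_⟩
    · exact (hP (x.1 - u)).mpr (by rw [show x.1 - u + u = x.1 by ring]; exact hPx)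
    · exact (hQ (y.1 - u)).mpr (by rw [show y.1 - u + u = y.1 by ring]; exact hQy)
    · refine connIn_map_fwd (σ := fun v => (v.1 - u, v.2)) (fun v hv => ?_)
        (fun _ _ h => step_ρT_rev ω u h) hconn
      simp only [box, Set.mem_setOf_eq, Int.even_iff] at hv ⊢
      omega

lemma crossE_ρF (m n a b a' b' : ℤ) (hmn : Even (m + n)) (ha : a' = a + m) (hb : b' = b + m)
    (P Q P' Q' : ℤ → Prop) (hP : ∀ t, P t ↔ Q' (t + m)) (hQ : ∀ t, Q t ↔ P' (t + m)) :
    {ω : Config | (fun e => ω (ρF m n e)) ∈ CrossE a b 0 n P Q} = CrossE a' b' 0 n P' Q' := by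
  have hmn2 : (m + n) % 2 = 0 := Int.even_iff.mp hmn
  ext ω
  constructor
  · rintro ⟨x, y, hx2, hy2, hPx, hQy, hconn⟩
    refine ⟨(y.1 + m, n - y.2), (x.1 + m, n - x.2), by simp [hy2], by simp [hx2],
      (hQ y.1).mp hQy, (hP x.1).mp hPx, ?_⟩
    refine connIn_map_rev (σ := fun v => (v.1 + m, n - v.2)) (fun v hv => ?_)
      (fun _ _ h => step_ρF_fwd ω m n h) hconn
    simp only [box, Set.mem_setOf_eq, Int.even_iff] at hv ⊢
    omega
  · rintro ⟨x, y, hx2, hy2, hPx, hQy, hconn⟩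
    refine ⟨(y.1 - m, n - y.2), (x.1 - m, n - x.2), by simp [hy2], by simp [hx2], ?_, ?_, ?_⟩
    · exact (hP (y.1 - m)).mpr (by rw [show y.1 - m + m = y.1 by ring]; exact hQy)
    · exact (hQ (x.1 - m)).mpr (by rw [show x.1 - m + m = x.1 by ring]; exact hPx)
    · refine connIn_map_rev (σ := fun v => (v.1 - m, n - v.2)) (fun v hv => ?_)
        (fun _ _ h => step_ρF_rev ω m n h) hconn
      simp only [box, Set.mem_setOf_eq, Int.even_iff] at hv ⊢
      omega

lemma crossE_ρR (m n a b a' b' : ℤ) (hmn : Even (m + n)) (ha : a' = m - b) (hb : b' = m - a)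
    (P Q P' Q' : ℤ → Prop) (hP : ∀ t, P t ↔ Q' (m - t)) (hQ : ∀ t, Q t ↔ P' (m - t)) :
    {ω : Config | (fun e => ω (ρR m n e)) ∈ CrossE a b 0 n P Q} = CrossE a' b' 0 n P' Q' := by
  have hmn2 : (m + n) % 2 = 0 := Int.even_iff.mp hmn
  ext ω
  constructor
  · rintro ⟨x, y, hx2, hy2, hPx, hQy, hconn⟩
    refine ⟨(m - y.1, n - y.2), (m - x.1, n - x.2), by simp [hy2], by simp [hx2],
      (hQ y.1).mp hQy, (hP x.1).mp hPx, ?_⟩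
    refine connIn_map_rev (σ := fun v => (m - v.1, n - v.2)) (fun v hv => ?_)
      (fun _ _ h => step_ρR_fwd ω m n h) hconn
    simp only [box, Set.mem_setOf_eq, Int.even_iff] at hv ⊢
    omega
  · rintro ⟨x, y, hx2, hy2, hPx, hQy, hconn⟩
    refine ⟨(m - y.1, n - y.2), (m - x.1, n - x.2), by simp [hy2], by simp [hx2], ?_, ?_, ?_⟩
    · exact (hP (m - y.1)).mpr (by rw [show m - (m - y.1) = y.1 by ring]; exact hQy)
    · exact (hQ (m - x.1)).mpr (by rw [show m - (m - x.1) = x.1 by ring]; exact hPx)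
    · refine connIn_map_rev (σ := fun v => (m - v.1, n - v.2)) (fun v hv => ?_)
        (fun _ _ h => step_ρR_rev ω m n h) hconn
      simp only [box, Set.mem_setOf_eq, Int.even_iff] at hv ⊢
      omega

lemma crossE_ρX (m a b c d a' b' : ℤ) (hm : Even m) (ha : a' = m - b) (hb : b' = m - a)
    (P Q P' Q' : ℤ → Prop) (hP : ∀ t, P t ↔ P' (m - t)) (hQ : ∀ t, Q t ↔ Q' (m - t)) :
    {ω : Config | (fun e => ω (ρX m e)) ∈ CrossE a b c d P Q} = CrossE a' b' c d P' Q' := by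
  have hm2 : m % 2 = 0 := Int.even_iff.mp hm
  ext ω
  constructor
  · rintro ⟨x, y, hx2, hy2, hPx, hQy, hconn⟩
    refine ⟨(m - x.1, x.2), (m - y.1, y.2), by simpa using hx2, by simpa using hy2,
      (hP x.1).mp hPx, (hQ y.1).mp hQy, ?_⟩
    refine connIn_map_fwd (σ := fun v => (m - v.1, v.2)) (fun v hv => ?_)
      (fun _ _ h => step_ρX_fwd ω m h) hconn
    simp only [box, Set.mem_setOf_eq, Int.even_iff] at hv ⊢
    omega
  · rintro ⟨x, y, hx2, hy2, hPx, hQy, hconn⟩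
    refine ⟨(m - x.1, x.2), (m - y.1, y.2), by simpa using hx2, by simpa using hy2, ?_, ?_, ?_⟩
    · exact (hP (m - x.1)).mpr (by rw [show m - (m - x.1) = x.1 by ring]; exact hPx)
    · exact (hQ (m - y.1)).mpr (by rw [show m - (m - y.1) = y.1 by ring]; exact hQy)
    · refine connIn_map_fwd (σ := fun v => (m - v.1, v.2)) (fun v hv => ?_)
        (fun _ _ h => step_ρX_rev ω m h) hconn
      simp only [box, Set.mem_setOf_eq, Int.even_iff] at hv ⊢
      omega

end Transport
section Key

variable {μ : Measure Config} {p : ℝ}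

/-- The square-root trick step, via Harris. -/
lemma key_ineq (hB : IsBernoulli μ p) {A0 B C : Set Config} {E : Finset Edge}
    (hA0 : DepOn A0 E) (hBd : DepOn B E) (hIA : Incr A0) (hIB : Incr B)
    (hcov : C ⊆ A0 ∪ B) :
    (1 - (μ A0).toReal) * (1 - (μ B).toReal) ≤ 1 - (μ C).toReal := by
  haveI := hB.1
  have hh := harris hB E A0 B hA0 hBd hIA hIB
  have hui : (μ (A0 ∪ B)).toReal + (μ (A0 ∩ B)).toReal = (μ A0).toReal + (μ B).toReal := by
    rw [← ENNReal.toReal_add (measure_ne_top μ _) (measure_ne_top μ _),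
      measure_union_add_inter _ hBd.measurableSet,
      ENNReal.toReal_add (measure_ne_top μ _) (measure_ne_top μ _)]
  have hcv : (μ C).toReal ≤ (μ (A0 ∪ B)).toReal := prob_mono hB hcov
  nlinarith [prob_toReal_nonneg (μ := μ) (A0 ∩ B)]

end Key

theorem rightmost_point_lower_tail' (μ : Measure Config) (p : ℝ) (hB : IsBernoulli μ p)
    (k s n : ℕ) (hk : 1 ≤ k) (hs : 1 ≤ s) (hn : 1 ≤ n) :
    (μ {ω | ¬ Rge ω (n : ℤ) (-((k * s : ℕ) : ℤ) + 1)}).toReal ≤ (1 - V μ s n) ^ k := by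
  classical
  haveI := hB.1
  have hS1 : (1:ℤ) ≤ (s:ℤ) := by exact_mod_cast hs
  have hN1 : (1:ℤ) ≤ (n:ℤ) := by exact_mod_cast hn
  have hK1 : (1:ℤ) ≤ (k:ℤ) := by exact_mod_cast hk
  have hcast : ((k * s : ℕ) : ℤ) = (k:ℤ) * (s:ℤ) := by push_cast; ring
  -- the chain of boxes and events
  set A : ℕ → Set Config := fun i =>
    CrossE (-(i:ℤ)*(s:ℤ)) (-(i:ℤ)*(s:ℤ) + (s:ℤ)) 0 (n:ℤ)
      (if i = 0 then fun t => t = 0 else fun _ => True)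
      (if i = k then fun t => -((k:ℤ)*(s:ℤ)) + 1 ≤ t else fun _ => True) with hAdef
  set F : ℕ → Finset Edge := fun i =>
    eSup (-(i:ℤ)*(s:ℤ)) (-(i:ℤ)*(s:ℤ) + (s:ℤ)) 0 (n:ℤ) with hFdef
  have h_dep : ∀ i, DepOn (A i) (F i) := fun i => depOn_crossE _ _ _ _ _ _
  -- each event implies Rge
  have h_subRge : ∀ i ≤ k, A i ⊆ {ω : Config | Rge ω (n:ℤ) (-((k:ℤ)*(s:ℤ)) + 1)} := by
    intro i hik ω hω
    obtain ⟨x, y, hx2, hy2, hPx, hQy, hconn⟩ := hω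
    have hxbox := hconn.1
    have hybox := hconn.mem_last
    obtain ⟨hx1, hx2', hx3, hx4, hx5⟩ := hxbox
    obtain ⟨hy1, hy2', hy3, hy4, hy5⟩ := hybox
    have hxe : Even x.1 := by rw [hx2] at hx5; simpa using hx5
    have hns : (-(i:ℤ)) * (s:ℤ) = -((i:ℤ)*(s:ℤ)) := by ring
    have hx0 : x.1 ≤ 0 := by
      by_cases h0 : i = 0
      · subst h0; rw [if_pos rfl] at hPx; omega
      · have h1i : (1:ℤ) ≤ (i:ℤ) := by
          have : 1 ≤ i := Nat.one_le_iff_ne_zero.mpr h0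
          exact_mod_cast this
        have := mul_le_mul_of_nonneg_right h1i (by omega : (0:ℤ) ≤ (s:ℤ))
        rw [one_mul] at this
        omega
    have hyt : -((k:ℤ)*(s:ℤ)) + 1 ≤ y.1 := by
      by_cases hkk : i = k
      · subst hkk; rw [if_pos rfl] at hQy; exact hQy
      · have hik' : (i:ℤ) + 1 ≤ (k:ℤ) := by
          have : i + 1 ≤ k := Nat.succ_le_of_lt (lt_of_le_of_ne hik hkk)
          exact_mod_cast this
        have := mul_le_mul_of_nonneg_right hik' (by omega : (0:ℤ) ≤ (s:ℤ))
        rw [add_mul, one_mul] at this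
        omega
    refine ⟨y.1, x.1, hxe, hx0, hyt, ?_⟩
    have hxx : x = ((x.1, 0) : Vtx) := Prod.ext_iff.mpr ⟨rfl, hx2⟩
    have hyy : y = ((y.1, (n:ℤ)) : Vtx) := Prod.ext_iff.mpr ⟨rfl, hy2⟩
    rw [← hxx, ← hyy]
    exact hconn.toConn
  -- the supports are disjoint
  have h_disj : ∀ i j : ℕ, i < j → Disjoint (F i) (F j) := by
    intro i j hij
    rw [Finset.disjoint_left]
    intro e hei hej
    rw [hFdef] at hei hej
    simp only [mem_eSup] at hei hej
    obtain ⟨⟨x1, x2⟩, d⟩ := e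
    have hmul : (i:ℤ)*(s:ℤ) + (s:ℤ) ≤ (j:ℤ)*(s:ℤ) := by
      have hij' : (i:ℤ) + 1 ≤ (j:ℤ) := by exact_mod_cast hij
      nlinarith
    cases d <;> simp only [tip] at hei hej <;>
      simp only [Prod.fst_add, Prod.snd_add, if_true, if_false] at hei hej <;>
    · obtain ⟨a1, a2, a3, a4, a5, a6, a7, a8⟩ := hei
      obtain ⟨b1, b2, b3, b4, b5, b6, b7, b8⟩ := hej
      simp_all
      omega
  -- product structure
  have h_prodm : ∀ m : ℕ, (μ (⋂ i ∈ Finset.range m, (A i)ᶜ)).toReal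
      = ∏ i ∈ Finset.range m, (μ ((A i)ᶜ)).toReal := by
    intro m
    induction m with
    | zero => simp
    | succ m ih =>
      rw [Finset.range_add_one, Finset.prod_insert Finset.notMem_range_self, ← ih]
      have hbi : (⋂ i ∈ insert m (Finset.range m), (A i)ᶜ)
          = (A m)ᶜ ∩ (⋂ i ∈ Finset.range m, (A i)ᶜ) := by
        rw [Finset.set_biInter_insert]
      rw [hbi]
      refine measure_inter_eq_mul hB ((h_dep m).compl) (E := F m)
        (F := (Finset.range m).biUnion F) ?_ ?_
      · intro ω ω' hag hω
        simp only [Set.mem_iInter] at hω ⊢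
        intro i hi
        refine (h_dep i).compl (fun e he => hag e ?_) (hω i hi)
        exact Finset.mem_biUnion.mpr ⟨i, hi, he⟩
      · rw [Finset.disjoint_biUnion_right]
        exact fun i hi => (h_disj i m (Finset.mem_range.mp hi)).symm
  -- middle boxes have probability V
  have h_Veq : V μ s n
      = (μ (CrossE 0 (s:ℤ) 0 (n:ℤ) (fun _ => True) (fun _ => True))).toReal := by
    unfold V
    rw [crossedVert_eq]
  have h_mid : ∀ i, i ≠ 0 → i ≠ k → (μ (A i)).toReal = V μ s n := by
    intro i hi0 hik
    have hAi : A i = CrossE (-(i:ℤ)*(s:ℤ)) (-(i:ℤ)*(s:ℤ) + (s:ℤ)) 0 (n:ℤ)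
        (fun _ => True) (fun _ => True) := by
      rw [hAdef]
      simp only [if_neg hi0, if_neg hik]
    rcases Int.even_or_odd ((i:ℤ)*(s:ℤ)) with he | ho
    · have h1 := crossE_ρT (-(i:ℤ)*(s:ℤ)) 0 (s:ℤ) 0 (n:ℤ)
        (-(i:ℤ)*(s:ℤ)) (-(i:ℤ)*(s:ℤ) + (s:ℤ))
        (by simpa using he.neg) (by ring) (by ring)
        (fun _ => True) (fun _ => True) (fun _ => True) (fun _ => True)
        (fun t => Iff.rfl) (fun t => Iff.rfl)
      rw [hAi, ← h1, h_Veq]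
      exact measure_comp_eq hB (depOn_crossE _ _ _ _ _ _) _ (ρT_inj _)
    · have h1 : ((i:ℤ)*(s:ℤ)) % 2 = 1 := Int.odd_iff.mp ho
      have hm : Even ((s:ℤ) - (i:ℤ)*(s:ℤ)) := by
        have hSodd : ¬ Even (s:ℤ) := fun hse =>
          (Int.not_odd_iff_even.mpr (Int.even_mul.mpr (Or.inr hse))) ho
        have h2 : (s:ℤ) % 2 = 1 := by
          rcases Int.even_or_odd (s:ℤ) with h | h
          · exact absurd h hSodd
          · exact Int.odd_iff.mp h
        rw [Int.even_iff]
        omega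
      have h1 := crossE_ρX ((s:ℤ) - (i:ℤ)*(s:ℤ)) 0 (s:ℤ) 0 (n:ℤ)
        (-(i:ℤ)*(s:ℤ)) (-(i:ℤ)*(s:ℤ) + (s:ℤ)) hm (by ring) (by ring)
        (fun _ => True) (fun _ => True) (fun _ => True) (fun _ => True)
        (fun t => Iff.rfl) (fun t => Iff.rfl)
      rw [hAi, ← h1, h_Veq]
      exact measure_comp_eq hB (depOn_crossE _ _ _ _ _ _) _ (ρX_inj _)
  -- identify `A 0`
  have h0k : (0:ℕ) ≠ k := by omega
  have hA0 : A 0 = CrossE 0 (s:ℤ) 0 (n:ℤ) (fun t => t = 0) (fun _ => True) := by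
    rw [hAdef]
    simp only [if_pos rfl, if_neg h0k]
    norm_num
  have hAk : A k = CrossE (-(k:ℤ)*(s:ℤ)) (-(k:ℤ)*(s:ℤ) + (s:ℤ)) 0 (n:ℤ)
      (fun _ => True) (fun t => -((k:ℤ)*(s:ℤ)) + 1 ≤ t) := by
    rw [hAdef]
    simp only [if_neg (by omega : k ≠ 0), if_pos rfl]
    norm_num
  -- transport the last box to the standard box, by case analysis on parities
  obtain ⟨B, hBeq, hBdep, hBincr, hcov⟩ :
      ∃ B : Set Config, (μ (A k)).toReal = (μ B).toReal
        ∧ DepOn B (eSup 0 (s:ℤ) 0 (n:ℤ)) ∧ Incr B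
        ∧ CrossE 0 (s:ℤ) 0 (n:ℤ) (fun _ => True) (fun _ => True)
            ⊆ CrossE 0 (s:ℤ) 0 (n:ℤ) (fun t => t = 0) (fun _ => True) ∪ B := by
    by_cases h1 : Even ((k:ℤ)*(s:ℤ) + (n:ℤ))
    · -- vertical flip
      refine ⟨CrossE 0 (s:ℤ) 0 (n:ℤ) (fun t => 1 ≤ t) (fun _ => True), ?_,
        depOn_crossE _ _ _ _ _ _, incr_crossE _ _ _ _ _ _, ?_⟩
      · have hpar : Even (-((k:ℤ)*(s:ℤ)) + (n:ℤ)) := by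
          rw [Int.even_iff] at h1 ⊢; omega
        have h2 := crossE_ρF (-((k:ℤ)*(s:ℤ))) (n:ℤ) 0 (s:ℤ)
          (-(k:ℤ)*(s:ℤ)) (-(k:ℤ)*(s:ℤ) + (s:ℤ)) hpar (by ring) (by ring)
          (fun t => 1 ≤ t) (fun _ => True)
          (fun _ => True) (fun t => -((k:ℤ)*(s:ℤ)) + 1 ≤ t)
          (fun t => by constructor <;> (intro h; omega)) (fun t => by simp)
        rw [hAk, ← h2]
        exact measure_comp_eq hB (depOn_crossE _ _ _ _ _ _) _ (ρF_inj _ _)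
      · rintro ω ⟨x, y, hx2, hy2, -, -, hconn⟩
        obtain ⟨hb1, hb2, hb3, hb4, hb5⟩ := hconn.1
        by_cases hx0 : x.1 = 0
        · exact Or.inl ⟨x, y, hx2, hy2, hx0, trivial, hconn⟩
        · exact Or.inr ⟨x, y, hx2, hy2, by omega, trivial, hconn⟩
    · by_cases h2 : Even ((k:ℤ)*(s:ℤ) - (s:ℤ) + (n:ℤ))
      · -- rotation
        refine ⟨CrossE 0 (s:ℤ) 0 (n:ℤ) (fun t => t ≤ (s:ℤ) - 1) (fun _ => True), ?_,
          depOn_crossE _ _ _ _ _ _, incr_crossE _ _ _ _ _ _, ?_⟩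
        · have hpar : Even ((s:ℤ) - (k:ℤ)*(s:ℤ) + (n:ℤ)) := by
            rw [Int.even_iff] at h2 ⊢; omega
          have h3 := crossE_ρR ((s:ℤ) - (k:ℤ)*(s:ℤ)) (n:ℤ) 0 (s:ℤ)
            (-(k:ℤ)*(s:ℤ)) (-(k:ℤ)*(s:ℤ) + (s:ℤ)) hpar (by ring) (by ring)
            (fun t => t ≤ (s:ℤ) - 1) (fun _ => True)
            (fun _ => True) (fun t => -((k:ℤ)*(s:ℤ)) + 1 ≤ t)
            (fun t => by constructor <;> (intro h; omega)) (fun t => by simp)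
          rw [hAk, ← h3]
          exact measure_comp_eq hB (depOn_crossE _ _ _ _ _ _) _ (ρR_inj _ _)
        · have hSodd : ((s:ℤ)) % 2 = 1 := by
            rw [Int.not_even_iff] at h1
            rw [Int.even_iff] at h2
            omega
          rintro ω ⟨x, y, hx2, hy2, -, -, hconn⟩
          obtain ⟨hb1, hb2, hb3, hb4, hb5⟩ := hconn.1
          rw [Int.even_iff] at hb5
          exact Or.inr ⟨x, y, hx2, hy2, by omega, trivial, hconn⟩
      · -- pure translation; here `n` is odd
        have hS2 : ((s:ℤ)) % 2 = 0 := by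
          rw [Int.not_even_iff] at h1 h2
          omega
        have hks : Even ((k:ℤ)*(s:ℤ)) := (Int.even_iff.mpr hS2).mul_left _
        have hNodd : ((n:ℤ)) % 2 = 1 := by
          have := Int.even_iff.mp hks
          rw [Int.not_even_iff] at h1
          omega
        refine ⟨CrossE 0 (s:ℤ) 0 (n:ℤ) (fun _ => True) (fun t => 1 ≤ t), ?_,
          depOn_crossE _ _ _ _ _ _, incr_crossE _ _ _ _ _ _, ?_⟩
        · have h3 := crossE_ρT (-((k:ℤ)*(s:ℤ))) 0 (s:ℤ) 0 (n:ℤ)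
            (-(k:ℤ)*(s:ℤ)) (-(k:ℤ)*(s:ℤ) + (s:ℤ)) hks.neg (by ring) (by ring)
            (fun _ => True) (fun t => 1 ≤ t)
            (fun _ => True) (fun t => -((k:ℤ)*(s:ℤ)) + 1 ≤ t)
            (fun t => Iff.rfl) (fun t => by constructor <;> (intro h; omega))
          rw [hAk, ← h3]
          exact measure_comp_eq hB (depOn_crossE _ _ _ _ _ _) _ (ρT_inj _)
        · rintro ω ⟨x, y, hx2, hy2, -, -, hconn⟩
          obtain ⟨hb1, hb2, hb3, hb4, hb5⟩ := hconn.mem_last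
          rw [Int.even_iff] at hb5
          exact Or.inr ⟨x, y, hx2, hy2, trivial, by omega, hconn⟩
  -- the key inequality from Harris
  have hkey : (1 - (μ (A 0)).toReal) * (1 - (μ (A k)).toReal) ≤ 1 - V μ s n := by
    rw [hA0, hBeq, h_Veq]
    exact key_ineq hB (depOn_crossE _ _ _ _ _ _) hBdep
      (incr_crossE _ _ _ _ _ _) hBincr hcov
  -- assemble
  have hsub : {ω : Config | ¬ Rge ω (n:ℤ) (-((k * s : ℕ) : ℤ) + 1)}
      ⊆ ⋂ i ∈ Finset.range (k+1), (A i)ᶜ := by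
    intro ω hω
    simp only [Set.mem_iInter]
    intro i hi hAi
    refine hω ?_
    have hik : i ≤ k := by have := Finset.mem_range.mp hi; omega
    have := h_subRge i hik hAi
    rw [show -((k * s : ℕ) : ℤ) + 1 = -((k:ℤ)*(s:ℤ)) + 1 by rw [hcast]]
    exact this
  have hmono := prob_mono hB hsub
  rw [h_prodm (k+1)] at hmono
  have hV1 : V μ s n ≤ 1 := by unfold V; exact prob_toReal_le_one hB _
  have h1V : (0:ℝ) ≤ 1 - V μ s n := by linarith
  obtain ⟨k', rfl⟩ : ∃ k', k = k' + 1 := ⟨k - 1, by omega⟩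
  have hprod : ∏ i ∈ Finset.range (k'+1+1), (μ ((A i)ᶜ)).toReal
      = ((1 - V μ s n)^k') * ((μ ((A 0)ᶜ)).toReal * (μ ((A (k'+1))ᶜ)).toReal) := by
    rw [Finset.prod_range_succ, Finset.prod_range_succ']
    have hmid : ∀ i ∈ Finset.range k', (μ ((A (i+1))ᶜ)).toReal = 1 - V μ s n := by
      intro i hi
      rw [prob_compl hB (h_dep (i+1)), h_mid (i+1) (by omega)
        (by have := Finset.mem_range.mp hi; omega)]
    rw [Finset.prod_congr rfl hmid, Finset.prod_const, Finset.card_range]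
    ring
  rw [hprod] at hmono
  have hc0 : (μ ((A 0)ᶜ)).toReal = 1 - (μ (A 0)).toReal := prob_compl hB (h_dep 0)
  have hck : (μ ((A (k'+1))ᶜ)).toReal = 1 - (μ (A (k'+1))).toReal := prob_compl hB (h_dep _)
  rw [hc0, hck] at hmono
  calc (μ {ω : Config | ¬ Rge ω (n:ℤ) (-((k'+1) * s : ℕ) + 1 : ℤ)}).toReal
      ≤ ((1 - V μ s n)^k') * ((1 - (μ (A 0)).toReal) * (1 - (μ (A (k'+1))).toReal)) := by
        exact_mod_cast hmono
    _ ≤ ((1 - V μ s n)^k') * (1 - V μ s n) := by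
        exact mul_le_mul_of_nonneg_left hkey (pow_nonneg h1V k')
    _ = (1 - V μ s n) ^ (k'+1) := by rw [pow_succ]

/-- `P_p(R_n ≤ -k·s) ≤ (1 - V_p(s,n))^k`: the event
`R_n ≤ -ks` (including `R_n = -∞`) forces `k` disjoint translates of
`[0,s] × [0,n]` to each fail to be crossed vertically. Here `R_n ≤ -ks` is
expressed as the failure of `R_n ≥ -ks + 1`. -/
theorem rightmost_point_lower_tail (μ : Measure Config) (p : ℝ) (hB : IsBernoulli μ p)
    (k s n : ℕ) (hk : 1 ≤ k) (hs : 1 ≤ s) (hn : 1 ≤ n) :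
    (μ {ω | ¬ Rge ω (n : ℤ) (-((k * s : ℕ) : ℤ) + 1)}).toReal ≤ (1 - V μ s n) ^ k :=
  rightmost_point_lower_tail' μ p hB k s n hk hs hn

end OrientedPerc
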